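/- Let n ≥ 2 and 1 ≤ p ≤ ∞ with conjugate exponent q, and let R = R(n,p) be the unique positive solution of the equation h(t) = 2, where h(t) = (1 + 2^{1/q} t)(1 + t/(n−1)^{1/p})^{n−1}. Then R ≥ n(2^{1/n} − 1)/((n−1)^{1/q} + 2^{1/q}), and this inequality is an equality if and only if n = 2 and p = 1. -/

import Mathlib

open Finset Filter Topology
open scoped ENNReal

noncomputable def pnorm {n : ℕ} (p : ℝ≥0∞) (v : Fin n → ℝ) : ℝ :=
  if p = ⊤ then ⨆ i, |v i| else (∑ i, |v i| ^ p.toReal) ^ (1 / p.toReal)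

noncomputable def epow (a : ℝ) (p : ℝ≥0∞) : ℝ :=
  if p = ⊤ then 1 else a ^ (1 / p.toReal)

noncomputable def dsep {K : Type*} [NormedField K] {n : ℕ} (x : Fin n → K) (i : Fin n) : ℝ :=
  sInf {r : ℝ | ∃ j, j ≠ i ∧ r = ‖x i - x j‖}

noncomputable def Wcorr {K : Type*} [NormedField K] {n : ℕ} (f : Polynomial K)
    (x : Fin n → K) (i : Fin n) : K :=
  Polynomial.eval (x i) f / (f.leadingCoeff * ∏ j ∈ Finset.univ.erase i, (x i - x j))

def IsRootVector {K : Type*} [NormedField K] {n : ℕ} (f : Polynomial K) (ξ : Fin n → K) : Prop :=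
  ∀ z : K, Polynomial.eval z f = f.leadingCoeff * ∏ i, (z - ξ i)

lemma amgm_aux {n : ℕ} (hn : 2 ≤ n) {x y : ℝ} (hx : 0 < x) (hy : 0 < y)
    (h : (1 + x) * (1 + y) ^ (n - 1) = 2) :
    (n:ℝ) * ((2:ℝ) ^ ((1:ℝ)/(n:ℝ)) - 1) ≤ x + ((n:ℝ) - 1) * y ∧
    (x ≠ y → (n:ℝ) * ((2:ℝ) ^ ((1:ℝ)/(n:ℝ)) - 1) < x + ((n:ℝ) - 1) * y) := by
  have hn0 : (0:ℝ) < n := by positivity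
  have hx1 : (0:ℝ) < 1 + x := by linarith
  have hy1 : (0:ℝ) < 1 + y := by linarith
  set w₁ : ℝ := 1/(n:ℝ) with hw₁def
  set w₂ : ℝ := ((n:ℝ)-1)/(n:ℝ) with hw₂def
  have hw₁ : 0 < w₁ := by positivity
  have hn1 : (1:ℝ) ≤ (n:ℝ) - 1 := by
    have : (2:ℝ) ≤ (n:ℝ) := by exact_mod_cast hn
    linarith
  have hw₂ : 0 < w₂ := by rw [hw₂def]; positivity
  have hw : w₁ + w₂ = 1 := by rw [hw₁def, hw₂def]; field_simp; ring
  have hcast : ((n - 1 : ℕ) : ℝ) = (n:ℝ) - 1 := by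
    rw [Nat.cast_sub (by omega : 1 ≤ n), Nat.cast_one]
  have key : (2:ℝ) ^ ((1:ℝ)/(n:ℝ)) = (1+x)^w₁ * (1+y)^w₂ := by
    rw [← h, Real.mul_rpow hx1.le (by positivity), ← Real.rpow_natCast (1+y) (n-1),
      ← Real.rpow_mul hy1.le, hcast]
    congr 2
    rw [hw₂def]; ring
  have harith : w₁*(1+x)+w₂*(1+y) = 1 + (x + ((n:ℝ)-1)*y)/n := by
    rw [hw₁def, hw₂def]; field_simp; ring
  constructor
  · have := Real.geom_mean_le_arith_mean2_weighted hw₁.le hw₂.le hx1.le hy1.le hw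
    rw [← key, harith] at this
    have h2 : (n:ℝ) * ((2:ℝ) ^ ((1:ℝ)/(n:ℝ))) ≤ (n:ℝ) * (1 + (x + ((n:ℝ)-1)*y)/n) :=
      mul_le_mul_of_nonneg_left this hn0.le
    rw [mul_add, mul_div_cancel₀ _ hn0.ne'] at h2
    nlinarith
  · intro hne
    have hlogne : Real.log (1+x) ≠ Real.log (1+y) := by
      intro hc
      apply hne
      have := congrArg Real.exp hc
      rw [Real.exp_log hx1, Real.exp_log hy1] at this
      linarith
    have hstrict := strictConvexOn_exp.2 (Set.mem_univ (Real.log (1+x)))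
      (Set.mem_univ (Real.log (1+y))) hlogne hw₁ hw₂ hw
    simp only [smul_eq_mul, Real.exp_log hx1, Real.exp_log hy1] at hstrict
    have hexp : Real.exp (w₁ * Real.log (1+x) + w₂ * Real.log (1+y))
        = (1+x)^w₁ * (1+y)^w₂ := by
      rw [Real.exp_add, Real.rpow_def_of_pos hx1, Real.rpow_def_of_pos hy1,
        mul_comm w₁, mul_comm w₂]
    rw [hexp, ← key, harith] at hstrict
    have h2 : (n:ℝ) * ((2:ℝ) ^ ((1:ℝ)/(n:ℝ))) < (n:ℝ) * (1 + (x + ((n:ℝ)-1)*y)/n) :=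
      (mul_lt_mul_iff_right₀ hn0).mpr hstrict
    rw [mul_add, mul_div_cancel₀ _ hn0.ne'] at h2
    nlinarith

/-- lower bound for the unique positive solution `R` of `h(t) = 2`,
where `h(t) = (1 + 2^{1/q}t)(1 + t/(n−1)^{1/p})^{n−1}`:
`R ≥ n(2^{1/n} − 1)/((n−1)^{1/q} + 2^{1/q})`, with equality iff `n = 2` and `p = 1`. -/
theorem weierstrass_second_kind_radius_lower_bound {n : ℕ} (hn : 2 ≤ n)
    (p q : ℝ≥0∞) (hp : 1 ≤ p) (hpq : 1 / p + 1 / q = 1)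
    (R : ℝ) (hR : 0 < R)
    (hhR : (1 + epow 2 q * R) * (1 + R / epow ((n : ℝ) - 1) p) ^ (n - 1) = 2) :
    (n : ℝ) * ((2:ℝ) ^ ((1:ℝ) / (n : ℝ)) - 1) / (epow ((n : ℝ) - 1) q + epow 2 q) ≤ R ∧
    (R = (n : ℝ) * ((2:ℝ) ^ ((1:ℝ) / (n : ℝ)) - 1) / (epow ((n : ℝ) - 1) q + epow 2 q) ↔
      (n = 2 ∧ p = 1)) := by
  have hn1 : (1:ℝ) ≤ (n:ℝ) - 1 := by
    have : (2:ℝ) ≤ (n:ℝ) := by exact_mod_cast hn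
    linarith
  have hnm : (0:ℝ) < (n:ℝ) - 1 := by linarith
  set a := epow 2 q with hadef
  set b := epow ((n:ℝ)-1) p with hbdef
  set c := epow ((n:ℝ)-1) q with hcdef
  have key : 0 < a ∧ 0 < b ∧ 0 < c ∧ b * c = (n:ℝ) - 1 ∧
      (a * b = 1 ↔ (n = 2 ∧ p = 1)) := by
    rcases eq_or_ne p 1 with hp1 | hp1
    · subst hp1
      have hq : q = ⊤ := by
        simp only [one_div, inv_one] at hpq
        have h0 : q⁻¹ = 0 :=
          (ENNReal.add_right_inj (show (1:ℝ≥0∞) ≠ ⊤ by norm_num)).mp (by rw [hpq, add_zero])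
        simpa using h0
      subst hq
      have hav : a = 1 := by rw [hadef]; simp [epow]
      have hcv : c = 1 := by rw [hcdef]; simp [epow]
      have hbv : b = (n:ℝ) - 1 := by
        rw [hbdef]; simp [epow]
      rw [hav, hbv, hcv]
      refine ⟨one_pos, hnm, one_pos, by ring, ?_⟩
      constructor
      · intro h
        have h2 : (n:ℝ) = 2 := by linarith
        exact ⟨by exact_mod_cast h2, rfl⟩
      · rintro ⟨h2, -⟩
        subst h2; norm_num
    · rcases eq_or_ne p ⊤ with hptop | hptop
      · subst hptop
        have hq : q = 1 := by
          simp only [one_div, ENNReal.inv_top, zero_add] at hpq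
          simpa using hpq
        subst hq
        have hav : a = 2 := by rw [hadef]; simp [epow]
        have hcv : c = (n:ℝ) - 1 := by rw [hcdef]; simp [epow]
        have hbv : b = 1 := by rw [hbdef]; simp [epow]
        rw [hav, hbv, hcv]
        refine ⟨by norm_num, one_pos, hnm, by ring, ?_⟩
        constructor
        · intro h; norm_num at h
        · rintro ⟨-, h⟩; exact absurd h (by simp)
      · -- 1 < p < ⊤
        have hq0 : q ≠ 0 := by
          intro h; subst h; simp at hpq
        have hqtop : q ≠ ⊤ := by
          intro h; subst h
          simp only [one_div, ENNReal.inv_top, add_zero] at hpq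
          exact hp1 (by simpa using hpq)
        have hp0 : p ≠ 0 := by
          intro h; subst h; simp at hp
        have hpr1 : 1 < p.toReal := by
          rw [← ENNReal.toReal_one]
          exact (ENNReal.toReal_lt_toReal (by norm_num) hptop).mpr (lt_of_le_of_ne hp (Ne.symm hp1))
        have hqr : 0 < q.toReal := ENNReal.toReal_pos hq0 hqtop
        have hsum : 1/p.toReal + 1/q.toReal = 1 := by
          have h1 : (1/p + 1/q).toReal = 1 := by rw [hpq]; simp
          rw [ENNReal.toReal_add (by simp [hp0]) (by simp [hq0])] at h1
          rw [ENNReal.toReal_div, ENNReal.toReal_div] at h1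
          simpa using h1
        have hav : a = 2 ^ (1/q.toReal) := by rw [hadef]; simp [epow, hqtop]
        have hcv : c = ((n:ℝ)-1) ^ (1/q.toReal) := by rw [hcdef]; simp [epow, hqtop]
        have hbv : b = ((n:ℝ)-1) ^ (1/p.toReal) := by rw [hbdef]; simp [epow, hptop]
        rw [hav, hbv, hcv]
        have ha1 : (1:ℝ) < 2 ^ (1/q.toReal) :=
          Real.one_lt_rpow_iff_of_pos (by norm_num) |>.mpr (Or.inl ⟨by norm_num, by positivity⟩)
        have hb1 : (1:ℝ) ≤ ((n:ℝ)-1) ^ (1/p.toReal) :=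
          Real.one_le_rpow hn1 (by positivity)
        refine ⟨by positivity, by positivity, by positivity, ?_, ?_⟩
        · rw [← Real.rpow_add hnm, hsum, Real.rpow_one]
        · constructor
          · intro h; nlinarith
          · rintro ⟨-, h⟩; exact absurd h hp1
  obtain ⟨ha, hb, hc, hbc, hiff⟩ := key
  set x := a * R with hxdef
  set y := R / b with hydef
  have hx : 0 < x := by positivity
  have hy : 0 < y := by positivity
  have hsum : x + ((n:ℝ)-1) * y = (c + a) * R := by
    rw [hxdef, hydef, ← hbc]
    field_simp
    ring
  have hca : 0 < c + a := by positivity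
  have M := amgm_aux hn hx hy hhR
  set G := (n:ℝ) * ((2:ℝ) ^ ((1:ℝ)/(n:ℝ)) - 1) with hGdef
  have hle : G ≤ (c + a) * R := by rw [← hsum]; exact M.1
  constructor
  · rw [div_le_iff₀ hca]; linarith [hle]
  · constructor
    · intro heq
      by_contra hnot
      have hab : a * b ≠ 1 := fun h => hnot (hiff.mp h)
      have hxy : x ≠ y := by
        intro h
        apply hab
        rw [hxdef, hydef] at h
        field_simp at h
        apply mul_left_cancel₀ hR.ne'
        linear_combination R * h
      have hlt := M.2 hxy
      rw [hsum, heq] at hlt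
      have hcan : (c+a) * (G/(c+a)) = G := by field_simp
      rw [hcan] at hlt
      exact lt_irrefl _ hlt
    · rintro ⟨hn2, hp1⟩
      have hab : a * b = 1 := hiff.mpr ⟨hn2, hp1⟩
      have hxy : x = y := by
        rw [hxdef, hydef]
        field_simp
        linear_combination hab
      have hpow : (1 + x) ^ n = 2 := by
        calc (1+x)^n = (1+x) * (1+x)^(n-1) := by
              rw [← pow_succ']; congr 1; omega
          _ = (1+x) * (1+y)^(n-1) := by rw [hxy]
          _ = 2 := hhR
      have h1x : 1 + x = (2:ℝ) ^ ((1:ℝ)/(n:ℝ)) := by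
        have hx1 : (0:ℝ) < 1 + x := by linarith
        have h2 : ((1+x)^(n:ℕ)) ^ ((1:ℝ)/(n:ℝ)) = (2:ℝ) ^ ((1:ℝ)/(n:ℝ)) := by rw [hpow]
        rwa [← Real.rpow_natCast (1+x) n, ← Real.rpow_mul hx1.le,
          mul_one_div, div_self (by positivity : (n:ℝ) ≠ 0), Real.rpow_one] at h2
      have hGx : G = (n:ℝ) * x := by rw [hGdef, ← h1x]; ring
      have hfin : (c + a) * R = G := by
        rw [← hsum, ← hxy, hGx]; ring
      rw [eq_div_iff hca.ne']
      linarith [hfin]
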